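/- Let L be a Lie algebra over a field of characteristic zero with universal enveloping algebra U(L). Then U(L) is spanned as a vector space by the set of powers {x^n : x ∈ L, n ∈ ℕ} (where x^n is taken in U(L)). -/

import Mathlib

set_option maxHeartbeats 1000000
set_option synthInstance.maxHeartbeats 400000

open Finset in
theorem pow_sum_eq_sum_prod {R : Type*} [Ring R] {α : Type*} [DecidableEq α]
    (s : Finset α) (a : α → R) (m : ℕ) :
    (∑ i ∈ s, a i) ^ m =
      ∑ f ∈ Fintype.piFinset (fun _ : Fin m => s), (List.ofFn fun j => a (f j)).prod := by
  induction m with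
  | zero => simp
  | succ m ih =>
    rw [pow_succ', ih, Finset.mul_sum]
    simp_rw [Finset.sum_mul]
    rw [Finset.sum_comm, ← Finset.sum_product']
    refine Finset.sum_bij' (fun p _ => Fin.cons p.1 p.2) (fun f _ => (f 0, f ∘ Fin.succ))
      ?_ ?_ ?_ ?_ ?_
    · rintro ⟨i, f⟩ hp
      rw [Finset.mem_product] at hp
      rw [Fintype.mem_piFinset]
      intro j
      refine Fin.cases ?_ ?_ j
      · simpa using hp.1
      · intro j'
        simpa using (Fintype.mem_piFinset.1 hp.2) j'
    · intro f hf
      rw [Fintype.mem_piFinset] at hf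
      rw [Finset.mem_product]
      exact ⟨hf 0, Fintype.mem_piFinset.2 fun j => hf j.succ⟩
    · rintro ⟨i, f⟩ _
      simp only [Prod.mk.injEq, Fin.cons_zero, true_and]
      exact funext fun j => Fin.cons_succ (α := fun _ => α) i f j
    · intro f _
      exact funext fun j => Fin.cases rfl (fun j' => Fin.cons_succ (α := fun _ => α) _ _ j') j
    · rintro ⟨i, f⟩ _
      simp [List.ofFn_succ]

open Finset in
theorem polarization_sum {R : Type*} [Ring R] (n : ℕ) (a : Fin n → R) :
    ∑ T ∈ (Finset.univ : Finset (Fin n)).powerset,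
        (-1 : ℤ) ^ (n - T.card) • (∑ i ∈ T, a i) ^ n =
      ∑ σ : Equiv.Perm (Fin n), (List.ofFn fun j => a (σ j)).prod := by
  classical
  -- expand powers
  have expand : ∀ T : Finset (Fin n),
      (∑ i ∈ T, a i) ^ n
        = ∑ f ∈ (Finset.univ : Finset (Fin n → Fin n)).filter (fun f => ∀ j, f j ∈ T),
            (List.ofFn fun j => a (f j)).prod := by
    intro T
    rw [pow_sum_eq_sum_prod]
    refine Finset.sum_congr ?_ (fun _ _ => rfl)
    ext f
    simp [Fintype.mem_piFinset]
  simp_rw [expand, Finset.smul_sum, Finset.sum_filter]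
  rw [Finset.sum_comm]
  have key : ∀ f : Fin n → Fin n,
      (∑ T ∈ (Finset.univ : Finset (Fin n)).powerset,
        if ∀ j, f j ∈ T then (-1 : ℤ) ^ (n - T.card) • (List.ofFn fun j => a (f j)).prod else 0)
      = if Function.Surjective f then (List.ofFn fun j => a (f j)).prod else 0 := by
    intro f
    have h1 : ∀ T : Finset (Fin n), (∀ j, f j ∈ T) ↔ Finset.image f Finset.univ ⊆ T := by
      intro T
      constructor
      · intro h x hx
        obtain ⟨j, _, rfl⟩ := Finset.mem_image.1 hx
        exact h j
      · intro h j
        exact h (Finset.mem_image_of_mem f (Finset.mem_univ j))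
    simp_rw [h1]
    rw [Finset.sum_ite, Finset.sum_const_zero, add_zero]
    -- sum over T ⊇ image f, via complement bijection
    have h2 : ∑ T ∈ ((Finset.univ : Finset (Fin n)).powerset.filter
          (fun T => Finset.image f Finset.univ ⊆ T)),
          (-1 : ℤ) ^ (n - T.card) • (List.ofFn fun j => a (f j)).prod
        = ∑ B ∈ ((Finset.image f Finset.univ)ᶜ).powerset,
          (-1 : ℤ) ^ B.card • (List.ofFn fun j => a (f j)).prod := by
      refine Finset.sum_bij' (fun T _ => Tᶜ) (fun B _ => Bᶜ) ?_ ?_ ?_ ?_ ?_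
      · intro T hT
        rw [Finset.mem_filter] at hT
        rw [Finset.mem_powerset]
        intro x hx
        rw [Finset.mem_compl] at hx ⊢
        exact fun hx' => hx (hT.2 hx')
      · intro B hB
        rw [Finset.mem_powerset] at hB
        rw [Finset.mem_filter]
        refine ⟨Finset.mem_powerset.2 (Finset.subset_univ _), ?_⟩
        intro x hx
        rw [Finset.mem_compl]
        intro hx'
        exact Finset.mem_compl.1 (hB hx') hx
      · intro T _; exact compl_compl T
      · intro B _; exact compl_compl B
      · intro T _
        congr 1
        rw [Finset.card_compl, Fintype.card_fin]
    rw [h2, ← Finset.sum_smul]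
    rw [Finset.sum_powerset_neg_one_pow_card]
    by_cases hs : Function.Surjective f
    · have : (Finset.image f Finset.univ)ᶜ = ∅ := by
        rw [Finset.compl_eq_empty_iff]
        ext x
        simp only [Finset.mem_image, Finset.mem_univ, true_and, iff_true]
        obtain ⟨j, hj⟩ := hs x
        exact ⟨j, hj⟩
      rw [if_pos this, if_pos hs, one_smul]
    · have : (Finset.image f Finset.univ)ᶜ ≠ ∅ := by
        intro h
        apply hs
        intro x
        have : x ∈ Finset.image f Finset.univ := by
          by_contra hx
          have : x ∈ (Finset.image f Finset.univ)ᶜ := Finset.mem_compl.2 hx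
          rw [h] at this
          exact absurd this (Finset.notMem_empty x)
        obtain ⟨j, _, hj⟩ := Finset.mem_image.1 this
        exact ⟨j, hj⟩
      rw [if_neg this, if_neg hs, zero_smul]
  calc ∑ f : Fin n → Fin n, (∑ T ∈ (Finset.univ : Finset (Fin n)).powerset,
        if ∀ j, f j ∈ T then (-1 : ℤ) ^ (n - T.card) • (List.ofFn fun j => a (f j)).prod else 0)
      = ∑ f : Fin n → Fin n,
          if Function.Surjective f then (List.ofFn fun j => a (f j)).prod else 0 := by
        exact Finset.sum_congr rfl fun f _ => key f
    _ = ∑ f ∈ (Finset.univ : Finset (Fin n → Fin n)).filter Function.Surjective,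
          (List.ofFn fun j => a (f j)).prod := by
        rw [Finset.sum_filter]
    _ = ∑ σ : Equiv.Perm (Fin n), (List.ofFn fun j => a (σ j)).prod := by
        refine (Finset.sum_bij' (fun f hf => Equiv.ofBijective f
            (Finite.surjective_iff_bijective.1 (Finset.mem_filter.1 hf).2))
          (fun σ _ => ⇑σ) ?_ ?_ ?_ ?_ ?_)
        · intro f hf; exact Finset.mem_univ _
        · intro σ _
          exact Finset.mem_filter.2 ⟨Finset.mem_univ _, σ.surjective⟩
        · intro f hf; rfl
        · intro σ _; exact Equiv.ext fun x => rfl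
        · intro f hf; rfl

namespace UEAspan

open UniversalEnvelopingAlgebra

variable (k : Type*) [Field k] [CharZero k] (L : Type*) [LieRing L] [LieAlgebra k L]

attribute [local instance 100] LieRing.ofAssociativeRing

/-- the span of powers -/
def SP : Submodule k (UniversalEnvelopingAlgebra k L) :=
  Submodule.span k {y | ∃ (x : L) (n : ℕ), y = (ι k x) ^ n}

/-- the span of products of `m` generators -/
def P (m : ℕ) : Submodule k (UniversalEnvelopingAlgebra k L) :=
  Submodule.span k {y | ∃ l : List L, l.length = m ∧ y = (l.map (ι k)).prod}

theorem prod_mem_P (l : List L) : (l.map (ι k)).prod ∈ P k L l.length :=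
  Submodule.subset_span ⟨l, rfl, rfl⟩

theorem mul_mem_P (z : L) {m : ℕ} {x : UniversalEnvelopingAlgebra k L}
    (hx : x ∈ P k L m) : ι k z * x ∈ P k L (m + 1) := by
  refine Submodule.span_induction ?_ ?_ ?_ ?_ hx
  · rintro y ⟨l, rfl, rfl⟩
    exact Submodule.subset_span ⟨z :: l, rfl, by simp⟩
  · rw [mul_zero]; exact zero_mem _
  · intro u v _ _ hu hv
    rw [mul_add]; exact add_mem hu hv
  · intro c u _ hu
    rw [mul_smul_comm]; exact Submodule.smul_mem _ c hu

theorem ι_bracket (x y : L) :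
    ι k ⁅x, y⁆ = ι k x * ι k y - ι k y * ι k x := by
  rw [LieHom.map_lie, LieRing.of_associative_ring_bracket]

theorem perm_diff_mem : ∀ {l₁ l₂ : List L}, l₁.Perm l₂ →
    (l₁.map (ι k)).prod - (l₂.map (ι k)).prod ∈ P k L (l₁.length - 1) := by
  intro l₁ l₂ h
  induction h with
  | nil => simpa using zero_mem _
  | @cons x t₁ t₂ h ih =>
    have : ((x :: t₁).map (ι k)).prod - ((x :: t₂).map (ι k)).prod
        = ι k x * ((t₁.map (ι k)).prod - (t₂.map (ι k)).prod) := by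
      simp [mul_sub]
    rw [this]
    cases t₁ with
    | nil =>
      have ht₂ : t₂ = [] := List.Perm.eq_nil h.symm
      subst ht₂
      simpa using zero_mem _
    | cons y t =>
      have := mul_mem_P k L x ih
      simpa using this
  | swap x y l =>
    have : ((y :: x :: l).map (ι k)).prod - ((x :: y :: l).map (ι k)).prod
        = ((⁅y, x⁆ :: l).map (ι k)).prod := by
      simp only [List.map_cons, List.prod_cons, ι_bracket, sub_mul, mul_assoc]
    rw [this]
    have := prod_mem_P k L (⁅y, x⁆ :: l)
    simpa using this
  | @trans la lb lc h₁ h₂ ih₁ ih₂ =>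
    have hlen : la.length = lb.length := h₁.length_eq
    have : (la.map (ι k)).prod - (lc.map (ι k)).prod
        = ((la.map (ι k)).prod - (lb.map (ι k)).prod)
          + ((lb.map (ι k)).prod - (lc.map (ι k)).prod) := by abel
    rw [this]
    exact add_mem ih₁ (hlen ▸ ih₂)

theorem adjoin_range_ι_eq_top :
    Algebra.adjoin k (Set.range (ι k : L → UniversalEnvelopingAlgebra k L)) = ⊤ := by
  set A := Algebra.adjoin k (Set.range (ι k : L → UniversalEnvelopingAlgebra k L)) with hA
  let f : L →ₗ⁅k⁆ A :=
    { toFun := fun x => ⟨ι k x, Algebra.subset_adjoin ⟨x, rfl⟩⟩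
      map_add' := fun x y => Subtype.ext (by simp)
      map_smul' := fun c x => Subtype.ext (by simp)
      map_lie' := fun {x y} => Subtype.ext (by
        show (ι k ⁅x, y⁆ : UniversalEnvelopingAlgebra k L) = _
        rw [ι_bracket]
        simp [LieRing.of_associative_ring_bracket]) }
  have h : A.val.comp (lift k f) = AlgHom.id k (UniversalEnvelopingAlgebra k L) := by
    ext x
    show A.val (lift k f (ι k x)) = ι k x
    rw [lift_ι_apply]
    rfl
  rw [eq_top_iff]
  intro u _
  have := congrArg (fun g : UniversalEnvelopingAlgebra k L →ₐ[k] UniversalEnvelopingAlgebra k L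
    => g u) h
  simp only [AlgHom.coe_comp, Function.comp_apply, AlgHom.coe_id, id_eq] at this
  rw [← this]
  exact (lift k f u).2

theorem P_le_SP (n : ℕ) : P k L n ≤ SP k L := by
  induction n using Nat.strong_induction_on with
  | _ n ih =>
    rw [P, Submodule.span_le]
    rintro y ⟨l, hl, rfl⟩
    subst hl
    by_cases h0 : l.length = 0
    · rw [List.length_eq_zero_iff] at h0
      subst h0
      exact Submodule.subset_span ⟨0, 0, by simp⟩
    · set n := l.length with hn
      have hfac : ((Nat.factorial n : ℕ) : k) ≠ 0 := Nat.cast_ne_zero.2 (Nat.factorial_ne_zero n)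
      rw [SetLike.mem_coe, ← Submodule.smul_mem_iff _ hfac, Nat.cast_smul_eq_nsmul]
      set v : Fin n → L := l.get with hv
      have hofn : List.ofFn v = l := List.ofFn_get l
      have hcard : (Nat.factorial n) • (List.map (⇑(ι k)) l).prod
          = ∑ _σ : Equiv.Perm (Fin n), (List.map (⇑(ι k)) l).prod := by
        rw [Finset.sum_const, Finset.card_univ, Fintype.card_perm, Fintype.card_fin]
      rw [hcard]
      have split : ∑ _σ : Equiv.Perm (Fin n), (List.map (⇑(ι k)) l).prod
          = (∑ σ : Equiv.Perm (Fin n), (List.ofFn fun j => ι k (v (σ j))).prod)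
            + ∑ σ : Equiv.Perm (Fin n),
                ((List.map (⇑(ι k)) l).prod - (List.ofFn fun j => ι k (v (σ j))).prod) := by
        rw [← Finset.sum_add_distrib]
        exact Finset.sum_congr rfl fun σ _ => by abel
      rw [split]
      refine add_mem ?_ ?_
      · rw [← polarization_sum n (fun i => ι k (v i))]
        refine sum_mem fun T _ => ?_
        rw [← Submodule.mem_toAddSubgroup]
        refine AddSubgroup.zsmul_mem _ ?_ _
        rw [Submodule.mem_toAddSubgroup]
        have : (∑ i ∈ T, ι k (v i)) = ι k (∑ i ∈ T, v i) := (map_sum (ι k).toLinearMap _ _).symm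
        rw [this]
        exact Submodule.subset_span ⟨∑ i ∈ T, v i, n, rfl⟩
      · refine sum_mem fun σ _ => ?_
        have hmap : (List.ofFn fun j => ι k (v (σ j)))
            = List.map (⇑(ι k)) (List.ofFn (v ∘ σ)) := by
          rw [List.map_ofFn]
          rfl
        have hperm : l.Perm (List.ofFn (v ∘ σ)) := by
          rw [← hofn]
          exact (Equiv.Perm.ofFn_comp_perm σ v).symm
        have hd := perm_diff_mem k L hperm
        rw [hmap]
        exact ih (l.length - 1) (by omega) hd

theorem top_le_SP : (⊤ : Submodule k (UniversalEnvelopingAlgebra k L)) ≤ SP k L := by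
  rw [← Algebra.top_toSubmodule, ← adjoin_range_ι_eq_top k L, Algebra.adjoin_eq_span,
    Submodule.span_le]
  intro x hx
  obtain ⟨l', hl', rfl⟩ := Submonoid.exists_list_of_mem_closure hx
  have : ∀ l' : List (UniversalEnvelopingAlgebra k L),
      (∀ y ∈ l', y ∈ Set.range (ι k : L → UniversalEnvelopingAlgebra k L)) →
      ∃ l : List L, l'.prod = (l.map (ι k)).prod := by
    intro l' h
    induction l' with
    | nil => exact ⟨[], rfl⟩
    | cons y t iht =>
      obtain ⟨x, rfl⟩ := h y List.mem_cons_self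
      obtain ⟨l, hl⟩ := iht fun z hz => h z (List.mem_cons_of_mem _ hz)
      exact ⟨x :: l, by simp [hl]⟩
  obtain ⟨l, hl⟩ := this l' hl'
  rw [SetLike.mem_coe, hl]
  exact P_le_SP k L l.length (prod_mem_P k L l)

end UEAspan

/-- Over a field of characteristic zero, the universal enveloping algebra `U(L)` of a
Lie algebra `L` is spanned as a vector space by the powers `(ι x)^n` of elements of `L`. -/
theorem universalEnvelopingAlgebra_span_powers
    (k : Type*) [Field k] [CharZero k]
    (L : Type*) [LieRing L] [LieAlgebra k L] :
    Submodule.span k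
      {y : UniversalEnvelopingAlgebra k L |
        ∃ (x : L) (n : ℕ), y = (UniversalEnvelopingAlgebra.ι k x) ^ n} = ⊤ :=
  top_unique (UEAspan.top_le_SP k L)
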